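/- Suppose q' ≥ 2 and the positive rational q' lies in N_{p,q·q'}. Then N_{p,q} ≤ N_{p,q·q'}; consequently there is a surjective group homomorphism from H_{p,q} = G ⧸ N_{p,q} onto H_{p,q·q'} = G ⧸ N_{p,q·q'}. -/

import Mathlib

abbrev G : Type := {x : ℚ // 0 < x}

def toG (c : ℕ+) : G := ⟨(c : ℚ), by exact_mod_cast c.pos⟩

def Cmap (p q : ℕ+) (c : ℕ+) : ℕ+ :=
  if h : (q : ℕ) ∣ (c : ℕ) then
    ⟨(c : ℕ) / (q : ℕ), Nat.div_pos (Nat.le_of_dvd c.pos h) q.pos⟩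
  else p * c + 1

def E (p q : ℕ+) : ℕ+ → ℕ+ → Prop := Relation.EqvGen (fun c d => d = Cmap p q c)

def Npq (p q : ℕ+) : Subgroup G :=
  Subgroup.closure ({toG q} ∪ {x : G | ∃ c d : ℕ+, E p q c d ∧ x = toG c / toG d})

lemma toG_mul (a b : ℕ+) : toG (a * b) = toG a * toG b := by
  apply Subtype.ext
  simp [toG]

lemma toG_q_mem (p q q' : ℕ+) (h : toG q' ∈ Npq p (q * q')) : toG q ∈ Npq p (q * q') := by
  have h1 : toG (q * q') ∈ Npq p (q * q') :=
    Subgroup.subset_closure (Or.inl rfl)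
  have : toG q = toG (q * q') * (toG q')⁻¹ := by
    rw [toG_mul]; group
  rw [this]
  exact mul_mem h1 (inv_mem h)

theorem stmt10 (p q q' : ℕ+) (hp : 1 ≤ p) (hq : 2 ≤ q) (hq' : 2 ≤ q')
    (h : toG q' ∈ Npq p (q * q')) :
    Npq p q ≤ Npq p (q * q') ∧
      ∃ f : (G ⧸ Npq p q) →* (G ⧸ Npq p (q * q')), Function.Surjective f := by
  have hqmem := toG_q_mem p q q' h
  have key : ∀ c d : ℕ+, E p q c d → toG c / toG d ∈ Npq p (q * q') := by
    intro c d hE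
    induction hE with
    | rel c d hcd =>
      by_cases hdvd : (q : ℕ) ∣ (c : ℕ)
      · -- d = c / q, so c/d = q
        have hd : toG c / toG d = toG q := by
          subst hcd
          apply Subtype.ext
          have hc0 : (q : ℚ) ≠ 0 := by positivity
          have hcast : ((⟨(c : ℕ) / (q : ℕ), Nat.div_pos (Nat.le_of_dvd c.pos hdvd) q.pos⟩ : ℕ+) : ℕ) = (c : ℕ) / (q : ℕ) := rfl
          simp only [Cmap, hdvd, ↓reduceDIte]
          show (c : ℚ) / ((((c : ℕ) / (q : ℕ) : ℕ) : ℚ)) = (q : ℚ)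
          rw [Nat.cast_div hdvd hc0]
          have hcne : (c : ℚ) ≠ 0 := by positivity
          field_simp
        rw [hd]; exact hqmem
      · have hdvd' : ¬ ((q * q' : ℕ+) : ℕ) ∣ (c : ℕ) := by
          intro hc
          exact hdvd (dvd_trans ⟨(q' : ℕ), by push_cast; ring⟩ hc)
        have : Cmap p (q * q') c = Cmap p q c := by
          simp only [Cmap, hdvd, hdvd', ↓reduceDIte]
        exact Subgroup.subset_closure (Or.inr ⟨c, d, Relation.EqvGen.rel _ _ (by rw [hcd, this]), rfl⟩)
    | refl c => simpa using (Npq p (q * q')).one_mem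
    | symm c d _ ih =>
      have : toG d / toG c = (toG c / toG d)⁻¹ := by rw [inv_div]
      rw [this]; exact inv_mem ih
    | trans c d e _ _ ih1 ih2 =>
      have : toG c / toG e = (toG c / toG d) * (toG d / toG e) := by
        rw [div_mul_div_cancel]
      rw [this]; exact mul_mem ih1 ih2
  have hle : Npq p q ≤ Npq p (q * q') := by
    rw [Npq, Subgroup.closure_le]
    rintro x (rfl | ⟨c, d, hE, rfl⟩)
    · exact hqmem
    · exact key c d hE
  refine ⟨hle, ?_⟩
  refine ⟨QuotientGroup.map _ _ (MonoidHom.id G) (by simpa using hle), ?_⟩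
  intro x
  obtain ⟨g, rfl⟩ := QuotientGroup.mk_surjective x
  exact ⟨QuotientGroup.mk g, rfl⟩
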